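/- arXiv:1610.05215 — 3 statements merged into one kernel-verified Lean document; each statement's English description precedes it below -/
import Mathlib

section
/- Let a>0, b>0, τ≥0, χ≥0 and c < 2√a. Then the chemotaxis system has no traveling wave solution with speed c connecting (a/b, a/b) and (0,0); that is, there exist no nonnegative C² functions U,V:ℝ→ℝ satisfying U'' + cU' − χ(UV')' + U(a−bU) = 0 and V'' + τcV' − V + U = 0 on ℝ with (U(x),V(x)) → (a/b, a/b) as x→−∞ and (U(x),V(x)) → (0,0) as x→+∞. -/
open Real Set Filter intervalIntegral

section Auxiliary

private theorem c2_facts (f : ℝ → ℝ) (h : ContDiff ℝ 2 f) : Differentiable ℝ f ∧ Differentiable ℝ (deriv f) := by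
  have h2 : ContDiff ℝ ((1:ℕ)+1) f := by exact_mod_cast h
  rw [contDiff_succ_iff_deriv] at h2
  exact ⟨h2.1, h2.2.2.differentiable (by simp)⟩

private theorem quad_lower {a c : ℝ} (ha : 0 < a) (hc : c < 2 * Real.sqrt a) :
    ∃ δ : ℝ, 0 < δ ∧ ∀ r : ℝ, r ≤ 0 → δ * (1 + r ^ 2) ≤ r ^ 2 + c * r + a := by
  rcases le_or_gt c 0 with h | h
  · refine ⟨min a 1, lt_min ha one_pos, fun r hr => ?_⟩
    have h1 : min a 1 ≤ a := min_le_left _ _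
    have h2 : min a 1 ≤ 1 := min_le_right _ _
    nlinarith [mul_nonneg (neg_nonneg.mpr h) (neg_nonneg.mpr hr), sq_nonneg r]
  · have hca : c ^ 2 < 4 * a := by
      have hs : Real.sqrt a * Real.sqrt a = a := Real.mul_self_sqrt ha.le
      nlinarith [Real.sqrt_nonneg a]
    set θ : ℝ := (c ^ 2 / (4 * a) + 1) / 2 with hθdef
    have h4a : (0:ℝ) < 4 * a := by linarith
    have hθ1 : θ < 1 := by
      have : c ^ 2 / (4 * a) < 1 := (div_lt_one h4a).mpr hca
      rw [hθdef]; linarith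
    have hθ0 : 0 < θ := by
      have : 0 ≤ c ^ 2 / (4 * a) := div_nonneg (sq_nonneg c) h4a.le
      rw [hθdef]; linarith
    have hθa : c ^ 2 < 4 * θ * a := by
      have : c ^ 2 / (4 * a) < θ := by rw [hθdef]; have := (div_lt_one h4a).mpr hca; linarith
      calc c ^ 2 = (c ^ 2 / (4 * a)) * (4 * a) := by field_simp
        _ < θ * (4 * a) := by exact mul_lt_mul_of_pos_right this h4a
        _ = 4 * θ * a := by ring
    refine ⟨min (1 - θ) (a - c ^ 2 / (4 * θ)), lt_min (by linarith) ?_, fun r _ => ?_⟩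
    · have : c ^ 2 / (4 * θ) < a := by
        rw [div_lt_iff₀ (by linarith)]; nlinarith
      linarith
    · have h1 : min (1 - θ) (a - c ^ 2 / (4 * θ)) ≤ 1 - θ := min_le_left _ _
      have h2 : min (1 - θ) (a - c ^ 2 / (4 * θ)) ≤ a - c ^ 2 / (4 * θ) := min_le_right _ _
      have key : (1 - θ) * r ^ 2 + (a - c ^ 2 / (4 * θ)) ≤ r ^ 2 + c * r + a := by
        have h4θ : (0:ℝ) < 4 * θ := by linarith
        have : 0 ≤ (2 * θ * r + c) ^ 2 / (4 * θ) := div_nonneg (sq_nonneg _) h4θ.le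
        have hexp : (2 * θ * r + c) ^ 2 / (4 * θ) = θ * r ^ 2 + c * r + c ^ 2 / (4 * θ) := by
          field_simp; ring
        nlinarith
      nlinarith [sq_nonneg r]

private theorem linode_zero {A B U : ℝ → ℝ} (hU : ContDiff ℝ 2 U)
    (hA : Continuous A) (hB : Continuous B)
    (heq : ∀ x, deriv (deriv U) x = A x * deriv U x + B x * U x)
    (x0 : ℝ) (h0 : U x0 = 0) (h0' : deriv U x0 = 0) : ∀ x, U x = 0 := by
  obtain ⟨hUd, hU'd⟩ := c2_facts U hU
  set h : ℝ → ℝ := fun y => U y ^ 2 + deriv U y ^ 2 with hh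
  set D : ℝ → ℝ := fun y => 2 * U y * deriv U y + 2 * deriv U y * (A y * deriv U y + B y * U y) with hD
  have hh0 : h x0 = 0 := by simp [hh, h0, h0']
  have hhnn : ∀ y, 0 ≤ h y := fun y => by positivity
  have hhd : ∀ y, HasDerivAt h (D y) y := by
    intro y
    have h1 : HasDerivAt (fun z => U z ^ 2) (2 * U y * deriv U y) y := by
      have := ((hUd y).hasDerivAt).fun_pow 2
      simpa [mul_comm, mul_assoc, mul_left_comm] using this
    have h2 : HasDerivAt (fun z => deriv U z ^ 2) (2 * deriv U y * deriv (deriv U) y) y := by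
      have := ((hU'd y).hasDerivAt).fun_pow 2
      simpa [mul_comm, mul_assoc, mul_left_comm] using this
    rw [heq y] at h2
    simpa [hh, hD] using h1.fun_add h2
  intro x
  obtain ⟨K, hK⟩ : ∃ K : ℝ, ∀ y ∈ Icc (min x0 x) (max x0 x), |A y| ≤ K ∧ |B y| ≤ K := by
    obtain ⟨K, hK⟩ := (isCompact_Icc (a := min x0 x) (b := max x0 x)).exists_bound_of_continuousOn
      ((hA.abs.add hB.abs).continuousOn)
    refine ⟨K, fun y hy => ?_⟩
    have := hK y hy
    rw [Real.norm_eq_abs, Pi.add_apply, abs_of_nonneg (by positivity)] at this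
    have hBnn := abs_nonneg (B y)
    have hAnn := abs_nonneg (A y)
    exact ⟨by linarith, by linarith⟩
  have hK0 : 0 ≤ K := le_trans (abs_nonneg _) (hK (min x0 x) ⟨le_refl _, min_le_max⟩).1
  set L : ℝ := 1 + 3 * K with hL
  have hbound : ∀ y ∈ Icc (min x0 x) (max x0 x), D y ≤ L * h y ∧ -(L * h y) ≤ D y := by
    intro y hy
    obtain ⟨hAy, hBy⟩ := hK y hy
    have hA1 : A y ≤ K := (abs_le.mp hAy).2
    have hA2 : -K ≤ A y := (abs_le.mp hAy).1
    have hB1 : B y ≤ K := (abs_le.mp hBy).2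
    have hB2 : -K ≤ B y := (abs_le.mp hBy).1
    have s1 := sq_nonneg (U y + deriv U y)
    have s2 := sq_nonneg (U y - deriv U y)
    have s3 := sq_nonneg (deriv U y)
    have s4 := sq_nonneg (U y)
    constructor
    · simp only [hD, hh, hL]
      nlinarith [mul_nonneg (sub_nonneg.mpr hA1) s3, mul_nonneg (sub_nonneg.mpr hB1) s1,
        mul_nonneg (by linarith : (0:ℝ) ≤ K + B y) s2]
    · simp only [hD, hh, hL]
      nlinarith [mul_nonneg (by linarith : (0:ℝ) ≤ K + A y) s3,
        mul_nonneg (sub_nonneg.mpr hB1) s2, mul_nonneg (by linarith : (0:ℝ) ≤ K + B y) s1]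
  -- forward and backward Grönwall
  have hU0 : h x = 0 := by
    rcases le_or_gt x0 x with hx | hx
    · -- forward: ψ = h * exp(-(L y)) is antitone on [x0, x]
      set ψ : ℝ → ℝ := fun y => h y * Real.exp (-(L * y)) with hψ
      have hψd : ∀ y, HasDerivAt ψ ((D y - L * h y) * Real.exp (-(L * y))) y := by
        intro y
        have he : HasDerivAt (fun z => Real.exp (-(L * z))) (-L * Real.exp (-(L * y))) y := by
          have h1 := (Real.hasDerivAt_exp (-(L * y))).comp y (((hasDerivAt_id y).const_mul L).neg)
          simp only [Function.comp_def, mul_one] at h1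
          refine h1.congr_deriv ?_
          ring
        have := (hhd y).mul he
        refine this.congr_deriv ?_
        ring
      have hmono : AntitoneOn ψ (Icc x0 x) := by
        apply antitoneOn_of_deriv_nonpos (convex_Icc _ _)
        · exact fun y hy => ((hψd y).continuousAt).continuousWithinAt
        · exact fun y hy => ((hψd y).differentiableAt).differentiableWithinAt
        · intro y hy
          rw [interior_Icc] at hy
          rw [(hψd y).deriv]
          have hyI : y ∈ Icc (min x0 x) (max x0 x) := by
            rw [min_eq_left hx, max_eq_right hx]; exact ⟨hy.1.le, hy.2.le⟩
          have := (hbound y hyI).1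
          have : D y - L * h y ≤ 0 := by linarith
          exact mul_nonpos_of_nonpos_of_nonneg this (Real.exp_pos _).le
      have := hmono (left_mem_Icc.mpr hx) (right_mem_Icc.mpr hx) hx
      rw [hψ] at this
      simp only [hh0, zero_mul] at this
      have hle : h x * Real.exp (-(L * x)) ≤ 0 := this
      have := mul_nonneg (hhnn x) (Real.exp_pos (-(L * x))).le
      have hx0' : h x * Real.exp (-(L * x)) = 0 := le_antisymm hle this
      have := Real.exp_pos (-(L * x))
      rcases mul_eq_zero.mp hx0' with h' | h'
      · exact h'
      · linarith
    · -- backward: φ = h * exp (L y) is monotone on [x, x0]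
      set φ : ℝ → ℝ := fun y => h y * Real.exp (L * y) with hφ
      have hφd : ∀ y, HasDerivAt φ ((D y + L * h y) * Real.exp (L * y)) y := by
        intro y
        have he : HasDerivAt (fun z => Real.exp (L * z)) (L * Real.exp (L * y)) y := by
          have h1 := (Real.hasDerivAt_exp (L * y)).comp y ((hasDerivAt_id y).const_mul L)
          simp only [Function.comp_def, mul_one] at h1
          refine h1.congr_deriv ?_
          ring
        have := (hhd y).mul he
        refine this.congr_deriv ?_
        ring
      have hmono : MonotoneOn φ (Icc x x0) := by
        apply monotoneOn_of_deriv_nonneg (convex_Icc _ _)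
        · exact fun y hy => ((hφd y).continuousAt).continuousWithinAt
        · exact fun y hy => ((hφd y).differentiableAt).differentiableWithinAt
        · intro y hy
          rw [interior_Icc] at hy
          rw [(hφd y).deriv]
          have hyI : y ∈ Icc (min x0 x) (max x0 x) := by
            rw [min_eq_right hx.le, max_eq_left hx.le]; exact ⟨hy.1.le, hy.2.le⟩
          have := (hbound y hyI).2
          have : 0 ≤ D y + L * h y := by linarith
          exact mul_nonneg this (Real.exp_pos _).le
      have := hmono (left_mem_Icc.mpr hx.le) (right_mem_Icc.mpr hx.le) hx.le
      rw [hφ] at this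
      simp only [hh0, zero_mul] at this
      have hle : h x * Real.exp (L * x) ≤ 0 := this
      have hge := mul_nonneg (hhnn x) (Real.exp_pos (L * x)).le
      have hx0' : h x * Real.exp (L * x) = 0 := le_antisymm hle hge
      rcases mul_eq_zero.mp hx0' with h' | h'
      · exact h'
      · exact absurd h' (Real.exp_pos _).ne'
  have : U x ^ 2 = 0 := by
    have := sq_nonneg (deriv U x); have := sq_nonneg (U x)
    simp only [hh] at hU0; linarith
  exact pow_eq_zero_iff (by norm_num) |>.mp this

private theorem deriv_decay (k : ℝ) {U V : ℝ → ℝ} (hV : ContDiff ℝ 2 V) (hUc : Continuous U)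
    (heq : ∀ x, deriv (deriv V) x = V x - U x - k * deriv V x)
    (hV0 : Tendsto V atTop (nhds 0)) (hU0 : Tendsto U atTop (nhds 0)) :
    ∀ ε > 0, ∃ R : ℝ, ∀ x ≥ R, |deriv V x| ≤ ε := by
  obtain ⟨hVd, hV'd⟩ := c2_facts V hV
  have hVc : Continuous V := hVd.continuous
  have hV'c : Continuous (deriv V) := hV'd.continuous
  have hec : ∀ m : ℝ, Continuous (fun s : ℝ => Real.exp (m * s)) := fun m =>
    Real.continuous_exp.comp (continuous_const.mul continuous_id)
  have henc : Continuous (fun s : ℝ => Real.exp (-(k * s))) :=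
    Real.continuous_exp.comp (continuous_const.mul continuous_id).neg
  intro ε hε
  set η : ℝ := ε / (3 * Real.exp (2 * |k|)) with hη
  have hηpos : 0 < η := by positivity
  have h1 : ∀ᶠ t in atTop, |V t| ≤ η := by
    obtain ⟨N, hN⟩ := Metric.tendsto_atTop.mp hV0 η hηpos
    filter_upwards [eventually_ge_atTop N] with t ht
    have := hN t ht
    rw [Real.dist_eq, sub_zero] at this
    exact this.le
  have h2 : ∀ᶠ t in atTop, |V t - U t| ≤ η := by
    have hsub : Tendsto (fun t => V t - U t) atTop (nhds 0) := by simpa using hV0.sub hU0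
    obtain ⟨N, hN⟩ := Metric.tendsto_atTop.mp hsub η hηpos
    filter_upwards [eventually_ge_atTop N] with t ht
    have := hN t ht
    rw [Real.dist_eq, sub_zero] at this
    exact this.le
  obtain ⟨R, hR⟩ := (h1.and h2).exists_forall_of_atTop
  refine ⟨R, fun x hx => ?_⟩
  set h : ℝ → ℝ := fun t => V t - U t with hhdef
  have hhc : Continuous h := hVc.sub hUc
  set φ : ℝ → ℝ := fun t => Real.exp (k * t) * deriv V t with hφdef
  have hφd : ∀ t, HasDerivAt φ (Real.exp (k * t) * h t) t := by
    intro t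
    have he : HasDerivAt (fun z => Real.exp (k * z)) (k * Real.exp (k * t)) t := by
      have h1 := (Real.hasDerivAt_exp (k * t)).comp t ((hasDerivAt_id t).const_mul k)
      simp only [Function.comp_def, mul_one] at h1
      refine h1.congr_deriv ?_; ring
    have := he.fun_mul (hV'd t).hasDerivAt
    refine this.congr_deriv ?_
    rw [heq t]; simp only [hhdef]; ring
  have hFTC : ∀ s, Real.exp (k * s) * deriv V s
      = φ x + ∫ t in x..s, Real.exp (k * t) * h t := by
    intro s
    have hint : IntervalIntegrable (fun t => Real.exp (k * t) * h t) MeasureTheory.volume x s :=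
      ((hec k).mul hhc).intervalIntegrable _ _
    have h3 := integral_eq_sub_of_hasDerivAt (fun t _ => hφd t) hint
    simp only [hφdef] at h3 ⊢
    linarith
  have e1 : ∀ s, deriv V s = Real.exp (-(k * s)) * (φ x + ∫ t in x..s, Real.exp (k * t) * h t) := by
    intro s
    have h3 := hFTC s
    have h4 : Real.exp (-(k * s)) * (Real.exp (k * s) * deriv V s)
        = Real.exp (-(k * s)) * (φ x + ∫ t in x..s, Real.exp (k * t) * h t) := by rw [h3]
    rwa [← mul_assoc, ← Real.exp_add, neg_add_cancel, Real.exp_zero, one_mul] at h4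
  set g : ℝ → ℝ := fun s => deriv V s - Real.exp (-(k * s)) * φ x with hgdef
  have hgc : Continuous g := hV'c.sub (henc.mul continuous_const)
  have hgbound : ∀ s ∈ Icc x (x + 1), |g s| ≤ Real.exp |k| * η := by
    intro s hs
    have hxs : x ≤ s := hs.1
    have hs1 : s ≤ x + 1 := hs.2
    have hgs : g s = ∫ t in x..s, Real.exp (k * t - k * s) * h t := by
      have e2 : Real.exp (-(k * s)) * ∫ t in x..s, Real.exp (k * t) * h t
          = ∫ t in x..s, Real.exp (k * t - k * s) * h t := by
        rw [← intervalIntegral.integral_const_mul]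
        congr 1
        funext t
        rw [← mul_assoc, ← Real.exp_add]
        congr 2
        ring
      have : g s = Real.exp (-(k * s)) * ∫ t in x..s, Real.exp (k * t) * h t := by
        rw [hgdef]; simp only; rw [e1 s]; ring
      rw [this, e2]
    rw [hgs]
    have hb := intervalIntegral.norm_integral_le_of_norm_le_const
      (C := Real.exp |k| * η) (f := fun t => Real.exp (k * t - k * s) * h t)
      (a := x) (b := s) ?_
    · rw [Real.norm_eq_abs] at hb
      have habs : |s - x| ≤ 1 := by rw [abs_of_nonneg (by linarith)]; linarith
      calc |∫ t in x..s, Real.exp (k * t - k * s) * h t| ≤ Real.exp |k| * η * |s - x| := hb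
        _ ≤ Real.exp |k| * η * 1 := mul_le_mul_of_nonneg_left habs (by positivity)
        _ = Real.exp |k| * η := by ring
    · intro t ht
      rw [Set.uIoc_of_le hxs] at ht
      have ht1 : x ≤ t := ht.1.le
      have ht2 : t ≤ s := ht.2
      rw [Real.norm_eq_abs, abs_mul, Real.abs_exp]
      have he : Real.exp (k * t - k * s) ≤ Real.exp |k| := by
        apply Real.exp_le_exp.mpr
        have habs : |k * t - k * s| ≤ |k| := by
          rw [← mul_sub, abs_mul]
          have h5 : |t - s| ≤ 1 := by rw [abs_of_nonpos (by linarith)]; linarith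
          calc |k| * |t - s| ≤ |k| * 1 := mul_le_mul_of_nonneg_left h5 (abs_nonneg _)
            _ = |k| := by ring
        linarith [(abs_le.mp habs).2]
      have hht : |h t| ≤ η := (hR t (le_trans hx ht1)).2
      exact mul_le_mul he hht (abs_nonneg _) (Real.exp_pos _).le
  -- Now : V(x+1) - V x = J * φ x + ∫ g
  have hVFTC : (∫ s in x..(x+1), deriv V s) = V (x+1) - V x :=
    integral_eq_sub_of_hasDerivAt (fun s _ => (hVd s).hasDerivAt) (hV'c.intervalIntegrable _ _)
  set J : ℝ := ∫ s in x..(x+1), Real.exp (-(k * s)) with hJ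
  have hsplit : V (x+1) - V x = J * φ x + ∫ s in x..(x+1), g s := by
    rw [← hVFTC]
    have : (∫ s in x..(x+1), deriv V s)
        = ∫ s in x..(x+1), (Real.exp (-(k * s)) * φ x + g s) := by
      congr 1
      funext s
      rw [hgdef]; simp only; ring
    rw [this, intervalIntegral.integral_add ((henc.fun_mul continuous_const).intervalIntegrable _ _)
      (hgc.intervalIntegrable _ _), intervalIntegral.integral_mul_const, hJ]
  -- lower bound for exp(kx) * J
  have hJlow : Real.exp (-|k|) ≤ Real.exp (k * x) * J := by
    have e3 : Real.exp (k * x) * J = ∫ s in x..(x+1), Real.exp (k * x - k * s) := by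
      rw [hJ, ← intervalIntegral.integral_const_mul]
      congr 1
      funext s
      rw [← Real.exp_add, sub_eq_add_neg]
    rw [e3]
    have hcont2 : Continuous (fun s : ℝ => Real.exp (k * x - k * s)) :=
      Real.continuous_exp.comp (continuous_const.sub (continuous_const.mul continuous_id))
    have hptwise : ∀ s ∈ Icc x (x+1), Real.exp (-|k|) ≤ Real.exp (k * x - k * s) := by
      intro s hs
      apply Real.exp_le_exp.mpr
      have habs : |k * x - k * s| ≤ |k| := by
        rw [← mul_sub, abs_mul]
        have h5 : |x - s| ≤ 1 := by
          rw [abs_of_nonpos (by linarith [hs.1])]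
          linarith [hs.2]
        calc |k| * |x - s| ≤ |k| * 1 := mul_le_mul_of_nonneg_left h5 (abs_nonneg _)
          _ = |k| := by ring
      linarith [(abs_le.mp habs).1]
    have hmono := intervalIntegral.integral_mono_on (μ := MeasureTheory.volume) (a := x) (b := x + 1)
      (f := fun _ => Real.exp (-|k|)) (g := fun s => Real.exp (k * x - k * s))
      (by linarith) (intervalIntegrable_const) (hcont2.intervalIntegrable _ _) hptwise
    calc Real.exp (-|k|) = ((x+1) - x) • Real.exp (-|k|) := by simp
      _ = ∫ _ in x..(x+1), Real.exp (-|k|) := (intervalIntegral.integral_const _).symm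
      _ ≤ _ := hmono
  -- bound ∫ g
  have hGbound : |∫ s in x..(x+1), g s| ≤ Real.exp |k| * η := by
    have hb := intervalIntegral.norm_integral_le_of_norm_le_const
      (C := Real.exp |k| * η) (f := g) (a := x) (b := x + 1) ?_
    · rw [Real.norm_eq_abs] at hb
      simpa using hb
    · intro t ht
      rw [Set.uIoc_of_le (by linarith : x ≤ x + 1)] at ht
      exact hgbound t ⟨ht.1.le, ht.2⟩
  -- conclude
  have hφx : φ x = Real.exp (k * x) * deriv V x := rfl
  have hkey : (Real.exp (k * x) * J) * |deriv V x| ≤ 2 * η + Real.exp |k| * η := by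
    have habs : |J * φ x| ≤ |V (x+1)| + |V x| + |∫ s in x..(x+1), g s| := by
      have : J * φ x = (V (x+1) - V x) - ∫ s in x..(x+1), g s := by linarith [hsplit]
      rw [this]
      calc |V (x+1) - V x - ∫ s in x..(x+1), g s| ≤ |V (x+1) - V x| + |∫ s in x..(x+1), g s| :=
            abs_sub _ _
        _ ≤ (|V (x+1)| + |V x|) + |∫ s in x..(x+1), g s| := by
            gcongr
            exact abs_sub _ _
    have hV1 : |V (x+1)| ≤ η := (hR (x+1) (by linarith)).1
    have hV2 : |V x| ≤ η := (hR x hx).1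
    have heq2 : |J * φ x| = (Real.exp (k * x) * J) * |deriv V x| := by
      rw [hφx, show J * (Real.exp (k * x) * deriv V x) = (Real.exp (k*x) * J) * deriv V x by ring,
        abs_mul, abs_of_pos]
      have : 0 < Real.exp (k * x) * J := lt_of_lt_of_le (Real.exp_pos _) hJlow
      exact this
    rw [heq2] at habs
    linarith [habs, hGbound]
  have hVx : |deriv V x| * Real.exp (-|k|) ≤ 2 * η + Real.exp |k| * η := by
    calc |deriv V x| * Real.exp (-|k|) ≤ |deriv V x| * (Real.exp (k * x) * J) :=
          mul_le_mul_of_nonneg_left hJlow (abs_nonneg _)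
      _ = (Real.exp (k * x) * J) * |deriv V x| := by ring
      _ ≤ _ := hkey
  have hfinal : |deriv V x| ≤ (2 * η + Real.exp |k| * η) * Real.exp |k| := by
    calc |deriv V x| = |deriv V x| * Real.exp (-|k|) * Real.exp |k| := by
          rw [mul_assoc, ← Real.exp_add, neg_add_cancel, Real.exp_zero, mul_one]
      _ ≤ (2 * η + Real.exp |k| * η) * Real.exp |k| :=
          mul_le_mul_of_nonneg_right hVx (Real.exp_pos _).le
  refine hfinal.trans ?_
  have hee : Real.exp |k| * Real.exp |k| = Real.exp (2 * |k|) := by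
    rw [← Real.exp_add]; congr 1; ring
  have he1 : Real.exp |k| ≤ Real.exp (2 * |k|) := Real.exp_le_exp.mpr (by linarith [abs_nonneg k])
  have he2 : (1:ℝ) ≤ Real.exp |k| := Real.one_le_exp (abs_nonneg _)
  have hηε : η * (3 * Real.exp (2 * |k|)) = ε := by
    rw [hη]; field_simp
  nlinarith [Real.exp_pos |k|, Real.exp_pos (2*|k|), hηpos]

end Auxiliary

open Real Filter

/-- A traveling wave solution with speed `c` of the chemotaxis system
`u_t = u_xx − χ(u v_x)_x + u(a−bu)`, `τ v_t = v_xx − v + u`,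
connecting `(a/b, a/b)` and `(0,0)`. -/
def IsTravelingWave (a b χ τ c : ℝ) (U V : ℝ → ℝ) : Prop :=
  ContDiff ℝ 2 U ∧ ContDiff ℝ 2 V ∧ (∀ x, 0 ≤ U x) ∧ (∀ x, 0 ≤ V x) ∧
  (∀ x, deriv (deriv U) x + c * deriv U x
      - χ * deriv (fun y => U y * deriv V y) x + U x * (a - b * U x) = 0) ∧
  (∀ x, deriv (deriv V) x + τ * c * deriv V x - V x + U x = 0) ∧
  Tendsto U atBot (nhds (a / b)) ∧ Tendsto V atBot (nhds (a / b)) ∧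
  Tendsto U atTop (nhds 0) ∧ Tendsto V atTop (nhds 0)

set_option maxHeartbeats 2000000 in

/-- Theorem D: no traveling wave connecting `(a/b,a/b)` and `(0,0)`
exists with speed `c < 2√a`. -/
theorem no_traveling_wave_of_speed_lt (a b τ χ c : ℝ) (ha : 0 < a) (hb : 0 < b)
    (hτ : 0 ≤ τ) (hχ : 0 ≤ χ) (hc : c < 2 * Real.sqrt a) :
    ¬ ∃ U V : ℝ → ℝ, IsTravelingWave a b χ τ c U V := by
  rintro ⟨U, V, hU, hV, hU0, hV0, hUeq, hVeq, hUbot, hVbot, hUtop, hVtop⟩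
  obtain ⟨hUd, hU'd⟩ := c2_facts U hU
  obtain ⟨hVd, hV'd⟩ := c2_facts V hV
  have hUc : Continuous U := hUd.continuous
  have hU'c : Continuous (deriv U) := hU'd.continuous
  have hVc : Continuous V := hVd.continuous
  have hV'c : Continuous (deriv V) := hV'd.continuous
  set k : ℝ := τ * c with hk
  have hV'' : ∀ x, deriv (deriv V) x = V x - U x - k * deriv V x := by
    intro x; have := hVeq x; linarith
  have hprod : ∀ x, deriv (fun y => U y * deriv V y) x
      = deriv U x * deriv V x + U x * deriv (deriv V) x := by
    intro x
    exact deriv_mul (hUd x) (hV'd x)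
  set A : ℝ → ℝ := fun x => -c + χ * deriv V x with hA
  set B : ℝ → ℝ := fun x => χ * (V x - U x - k * deriv V x) - a + b * U x with hB
  have hU'' : ∀ x, deriv (deriv U) x = A x * deriv U x + B x * U x := by
    intro x
    have h1 := hUeq x
    rw [hprod x, hV'' x] at h1
    simp only [hA, hB]
    linear_combination h1
  have hAc : Continuous A := continuous_const.add (continuous_const.mul hV'c)
  have hBc : Continuous B := by
    apply Continuous.add (Continuous.sub ?_ continuous_const) (continuous_const.mul hUc)
    exact continuous_const.mul ((hVc.sub hUc).sub (continuous_const.mul hV'c))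
  have hab : 0 < a / b := div_pos ha hb
  by_cases hpos : ∀ x, 0 < U x
  swap
  · -- U vanishes somewhere ⇒ U ≡ 0 ⇒ contradiction with limit a/b at -∞
    push_neg at hpos
    obtain ⟨x0, hx0⟩ := hpos
    have h0 : U x0 = 0 := le_antisymm hx0 (hU0 x0)
    have hmin : IsLocalMin U x0 := Filter.Eventually.of_forall (fun y => h0 ▸ hU0 y)
    have h0' : deriv U x0 = 0 := hmin.deriv_eq_zero
    have hzero := linode_zero hU hAc hBc hU'' x0 h0 h0'
    have hconst : Tendsto U atBot (nhds 0) := by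
      have : U = fun _ => (0:ℝ) := funext hzero
      rw [this]
      exact tendsto_const_nhds
    have := tendsto_nhds_unique hUbot hconst
    linarith
  -- main case : U > 0 everywhere
  obtain ⟨δ, hδ, hquad⟩ := quad_lower ha hc
  set ε : ℝ := δ / 3 with hε
  have hεpos : 0 < ε := by rw [hε]; linarith
  set C : ℝ := 2 * χ + χ * |k| + b + χ + 1 with hC
  have hC0 : 0 < C := by
    have := abs_nonneg k
    have h1 : 0 ≤ χ * |k| := mul_nonneg hχ this
    rw [hC]; linarith
  set η : ℝ := ε / C with hη
  have hηpos : 0 < η := div_pos hεpos hC0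
  obtain ⟨R1, hR1⟩ := deriv_decay k hV hUc hV'' hVtop hUtop η hηpos
  have hU_ev : ∀ᶠ x in atTop, |U x| ≤ η := by
    obtain ⟨N, hN⟩ := Metric.tendsto_atTop.mp hUtop η hηpos
    filter_upwards [eventually_ge_atTop N] with t ht
    have := hN t ht; rw [Real.dist_eq, sub_zero] at this; exact this.le
  have hV_ev : ∀ᶠ x in atTop, |V x| ≤ η := by
    obtain ⟨N, hN⟩ := Metric.tendsto_atTop.mp hVtop η hηpos
    filter_upwards [eventually_ge_atTop N] with t ht
    have := hN t ht; rw [Real.dist_eq, sub_zero] at this; exact this.le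
  obtain ⟨R2, hR2⟩ := (hU_ev.and hV_ev).exists_forall_of_atTop
  set R : ℝ := max R1 R2 with hR
  -- tail bounds
  have htail : ∀ x ≥ R, χ * |deriv V x| ≤ ε ∧ χ * |V x - U x - k * deriv V x| + b * U x ≤ ε := by
    intro x hx
    have hx1 : x ≥ R1 := le_trans (le_max_left _ _) hx
    have hx2 : x ≥ R2 := le_trans (le_max_right _ _) hx
    have hV' := hR1 x hx1
    obtain ⟨hUx, hVx⟩ := hR2 x hx2
    have hCη : C * η = ε := by rw [hη]; field_simp
    have hknn := abs_nonneg k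
    have hχk : 0 ≤ χ * |k| := mul_nonneg hχ hknn
    constructor
    · have : χ * |deriv V x| ≤ χ * η := mul_le_mul_of_nonneg_left hV' hχ
      refine this.trans ?_
      nlinarith [hηpos.le]
    · have habs : |V x - U x - k * deriv V x| ≤ |V x| + |U x| + |k| * |deriv V x| := by
        calc |V x - U x - k * deriv V x| ≤ |V x - U x| + |k * deriv V x| := abs_sub _ _
          _ ≤ (|V x| + |U x|) + |k| * |deriv V x| := by
              rw [abs_mul]; gcongr; exact abs_sub _ _
      have hkV' : |k| * |deriv V x| ≤ |k| * η := mul_le_mul_of_nonneg_left hV' hknn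
      have hUxb : U x ≤ η := le_trans (le_abs_self _) hUx
      have h1 : χ * |V x - U x - k * deriv V x| ≤ χ * (2 * η + |k| * η) := by
        apply mul_le_mul_of_nonneg_left _ hχ
        linarith
      have h2 : b * U x ≤ b * η := mul_le_mul_of_nonneg_left hUxb hb.le
      nlinarith [hηpos.le]
  -- the logarithmic derivative r = U'/U
  set r : ℝ → ℝ := fun x => deriv U x / U x with hr
  have hrc : Continuous r := hU'c.div hUc (fun x => (hpos x).ne')
  set D : ℝ → ℝ := fun x =>
    (deriv (deriv U) x * U x - deriv U x * deriv U x) / (U x) ^ 2 with hD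
  have hrd : ∀ x, HasDerivAt r (D x) x := by
    intro x
    exact (hU'd x).hasDerivAt.div (hUd x).hasDerivAt (hpos x).ne'
  -- key differential inequality on the tail
  have hDle : ∀ x, R ≤ x → r x ≤ 0 → D x ≤ -(δ / 2) * (1 + r x ^ 2) := by
    intro x hx hrx
    obtain ⟨ht1, ht2⟩ := htail x hx
    have hUx := hpos x
    have hDx : D x = A x * r x + B x - r x ^ 2 := by
      rw [hD, hr]
      simp only
      rw [hU'' x]
      field_simp
    have hq := hquad (r x) hrx
    -- bound χ V' r
    have hb1 : χ * deriv V x * r x ≤ ε * ((1 + r x ^ 2) / 2) := by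
      have e1 : χ * deriv V x * r x ≤ (χ * |deriv V x|) * |r x| := by
        calc χ * deriv V x * r x ≤ |χ * deriv V x * r x| := le_abs_self _
          _ = (χ * |deriv V x|) * |r x| := by
              rw [abs_mul, abs_mul, abs_of_nonneg hχ]
      have e2 : |r x| ≤ (1 + r x ^ 2) / 2 := by nlinarith [sq_nonneg (|r x| - 1), sq_abs (r x)]
      calc χ * deriv V x * r x ≤ (χ * |deriv V x|) * |r x| := e1
        _ ≤ ε * ((1 + r x ^ 2) / 2) := by
            apply mul_le_mul ht1 e2 (abs_nonneg _) hεpos.le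
    -- bound B x
    have hb2 : B x ≤ -a + ε * (1 + r x ^ 2) := by
      have e1 : χ * (V x - U x - k * deriv V x) ≤ χ * |V x - U x - k * deriv V x| := by
        apply mul_le_mul_of_nonneg_left (le_abs_self _) hχ
      have e2 : (1:ℝ) ≤ 1 + r x ^ 2 := by nlinarith [sq_nonneg (r x)]
      have e3 : χ * |V x - U x - k * deriv V x| + b * U x ≤ ε * (1 + r x ^ 2) := by
        calc χ * |V x - U x - k * deriv V x| + b * U x ≤ ε := ht2
          _ = ε * 1 := by ring
          _ ≤ ε * (1 + r x ^ 2) := by apply mul_le_mul_of_nonneg_left e2 hεpos.le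
      have hbU : 0 ≤ b * U x := mul_nonneg hb.le (hU0 x)
      rw [hB]
      simp only
      linarith
    rw [hDx, hA]
    simp only
    have expand : (-c + χ * deriv V x) * r x + B x - r x ^ 2
        = -(r x ^ 2 + c * r x + a) + χ * deriv V x * r x + (B x + a) := by ring
    rw [expand]
    have : -(r x ^ 2 + c * r x + a) ≤ -(δ * (1 + r x ^ 2)) := by linarith
    rw [hε] at hb1 hb2
    linarith
  -- find x1 > R with r x1 < 0
  have hURpos : 0 < U R := hpos R
  obtain ⟨y, hyR, hyU⟩ : ∃ y, R < y ∧ U y < U R := by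
    have h1 : ∀ᶠ x in atTop, U x < U R := hUtop.eventually_lt_const hURpos
    obtain ⟨y, hy1, hy2⟩ := (h1.and (eventually_gt_atTop R)).exists
    exact ⟨y, hy2, hy1⟩
  obtain ⟨x1, hx1mem, hx1slope⟩ := exists_hasDerivAt_eq_slope U (deriv U) hyR
    hUc.continuousOn (fun z _ => (hUd z).hasDerivAt)
  have hx1R : R < x1 := hx1mem.1
  have hU'x1 : deriv U x1 < 0 := by
    rw [hx1slope]
    apply div_neg_of_neg_of_pos (by linarith) (by linarith)
  have hrx1 : r x1 < 0 := div_neg_of_neg_of_pos hU'x1 (hpos x1)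
  -- the window [x1, x2]
  set x2 : ℝ := x1 + 2 * (Real.pi + 1) / δ with hx2
  have hx12 : x1 < x2 := by
    rw [hx2]
    have : 0 < 2 * (Real.pi + 1) / δ := by positivity
    linarith
  -- r < 0 on [x1, x2]
  have hrneg : ∀ z ∈ Icc x1 x2, r z < 0 := by
    by_contra hcon
    push_neg at hcon
    obtain ⟨w, hw, hw0⟩ := hcon
    set S : Set ℝ := Icc x1 x2 ∩ r ⁻¹' (Ici 0) with hS
    have hSne : S.Nonempty := ⟨w, hw, hw0⟩
    have hSclosed : IsClosed S := isClosed_Icc.inter (isClosed_Ici.preimage hrc)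
    have hSbdd : BddBelow S := ⟨x1, fun z hz => hz.1.1⟩
    set y0 : ℝ := sInf S with hy0
    have hy0S : y0 ∈ S := hSclosed.csInf_mem hSne hSbdd
    have hy0r : 0 ≤ r y0 := hy0S.2
    have hy0x1 : x1 < y0 := by
      rcases lt_or_eq_of_le hy0S.1.1 with h | h
      · exact h
      · exfalso; rw [← h] at hy0r; linarith
    have hIoo_neg : ∀ z ∈ Ioo x1 y0, r z < 0 := by
      intro z hz
      by_contra hzr
      push_neg at hzr
      have hzS : z ∈ S := ⟨⟨hz.1.le, le_trans hz.2.le hy0S.1.2⟩, hzr⟩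
      exact absurd (csInf_le hSbdd hzS) (not_le.mpr hz.2)
    obtain ⟨ξ, hξmem, hξslope⟩ := exists_hasDerivAt_eq_slope r D hy0x1
      hrc.continuousOn (fun z _ => hrd z)
    have hξR : R ≤ ξ := le_of_lt (lt_trans hx1R hξmem.1)
    have hrξ : r ξ < 0 := hIoo_neg ξ hξmem
    have hDξ : D ξ ≤ -(δ / 2) * (1 + r ξ ^ 2) := hDle ξ hξR hrξ.le
    have hslope_pos : 0 < (r y0 - r x1) / (y0 - x1) :=
      div_pos (by linarith) (by linarith)
    rw [hξslope] at hDξ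
    nlinarith [sq_nonneg (r ξ), hslope_pos]
  -- final contradiction via arctan
  have hgd : ∀ y, HasDerivAt (fun z => Real.arctan (r z)) (1 / (1 + r y ^ 2) * D y) y := by
    intro y
    exact (Real.hasDerivAt_arctan (r y)).comp y (hrd y)
  obtain ⟨ξ, hξmem, hξslope⟩ := exists_hasDerivAt_eq_slope (fun z => Real.arctan (r z))
    (fun y => 1 / (1 + r y ^ 2) * D y) hx12
    (Real.continuous_arctan.comp hrc).continuousOn (fun z _ => hgd z)
  have hξR : R ≤ ξ := le_of_lt (lt_trans hx1R hξmem.1)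
  have hrξ : r ξ < 0 := hrneg ξ ⟨hξmem.1.le, hξmem.2.le⟩
  have hDξ : D ξ ≤ -(δ / 2) * (1 + r ξ ^ 2) := hDle ξ hξR hrξ.le
  have h1q : 0 < 1 + r ξ ^ 2 := by nlinarith [sq_nonneg (r ξ)]
  have hLHS : 1 / (1 + r ξ ^ 2) * D ξ ≤ -(δ / 2) := by
    have := mul_le_mul_of_nonneg_left hDξ (le_of_lt (div_pos one_pos h1q))
    calc 1 / (1 + r ξ ^ 2) * D ξ ≤ 1 / (1 + r ξ ^ 2) * (-(δ / 2) * (1 + r ξ ^ 2)) := this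
      _ = -(δ / 2) := by field_simp
  rw [hξslope] at hLHS
  have hdiff : Real.arctan (r x2) - Real.arctan (r x1) ≤ -(Real.pi + 1) := by
    have h2 : x2 - x1 = 2 * (Real.pi + 1) / δ := by rw [hx2]; ring
    have h3 : 0 < x2 - x1 := by linarith
    have := (div_le_iff₀ h3).mp hLHS
    rw [h2] at this
    calc Real.arctan (r x2) - Real.arctan (r x1) ≤ -(δ / 2) * (2 * (Real.pi + 1) / δ) := this
      _ = -(Real.pi + 1) := by field_simp
  have ha1 : -(Real.pi / 2) < Real.arctan (r x2) := Real.neg_pi_div_two_lt_arctan _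
  have ha2 : Real.arctan (r x1) < Real.pi / 2 := Real.arctan_lt_pi_div_two _
  linarith
end

section
/- Assume τ>0, 0<χ<1 and 0<μ<μ_τ satisfy condition (H), and set C̃₀ = a/(b−χ(1+τc_μ/2)) (the denominator is positive under (H)). Then for every C₀ ≥ C̃₀, every choice of μ̃ and d in the definition of ℰ_{τ,μ}(C₀), every u ∈ ℰ_{τ,μ}(C₀) and every x∈ℝ: (a − χ(V(x;u) − τc_μ·∂ₓV(x;u)) − (b−χ)C₀)·C₀ ≤ 0; that is, the constant function C₀ is a super-solution of the associated parabolic equation on ℝ×ℝ. -/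
open Real Filter MeasureTheory Set

/-- `c_μ = μ + a/μ`. -/
noncomputable def cmu (a μ : ℝ) : ℝ := μ + a / μ

/-- `μ_τ = √a` if `τ ≥ 1`, and `min{√a, √((1+τa)/(1−τ))}` if `0 < τ < 1`. -/
noncomputable def muTau (a τ : ℝ) : ℝ :=
  if 1 ≤ τ then Real.sqrt a else min (Real.sqrt a) (Real.sqrt ((1 + τ * a) / (1 - τ)))

/-- Condition (H) on `(τ, μ, χ)`. -/
noncomputable def condH (a b τ μ χ : ℝ) : Prop :=
  1 + τ * cmu a μ < (b - χ) / χ ∧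
  (μ + τ * cmu a μ) / Real.sqrt (1 + τ * μ * cmu a μ - μ ^ 2)
      + μ * (μ + τ * cmu a μ) / (1 + τ * μ * cmu a μ - μ ^ 2) ≤ (b - χ) / χ

/-- `V(x;u) = ∫₀^∞ ∫_ℝ (e^{−s}/√(4πs)) e^{−(x−z)²/(4s)} u(z+τcs) dz ds`. -/
noncomputable def Vfun (τ c : ℝ) (u : ℝ → ℝ) (x : ℝ) : ℝ :=
  ∫ s in Set.Ioi (0:ℝ), ∫ z : ℝ,
    (Real.exp (-s) / Real.sqrt (4 * Real.pi * s)) * Real.exp (-(x - z) ^ 2 / (4 * s))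
      * u (z + τ * c * s)

/-- `U⁺(x) = min{C₀, e^{−μx}}`. -/
noncomputable def Uplus (μ C₀ : ℝ) (x : ℝ) : ℝ := min C₀ (Real.exp (-μ * x))

/-- `U⁻(x) = max{0, e^{−μx} − d e^{−μ̃x}}`. -/
noncomputable def Uminus (μ μt d : ℝ) (x : ℝ) : ℝ :=
  max 0 (Real.exp (-μ * x) - d * Real.exp (-μt * x))

/-- `u ∈ ℰ_{τ,μ}(C₀)` (built from `μ̃` and `d`): bounded uniformly continuous with
`U⁻ ≤ u ≤ U⁺`. -/
def memE (μ C₀ μt d : ℝ) (u : ℝ → ℝ) : Prop :=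
  UniformContinuous u ∧ ∀ x, Uminus μ μt d x ≤ u x ∧ u x ≤ Uplus μ C₀ x

/-- sup bound: `|t| e^{-bt²} ≤ 1/√b`. -/
lemma abs_mul_exp_le {b : ℝ} (hb : 0 < b) (t : ℝ) :
    |t| * Real.exp (-b * t ^ 2) ≤ (Real.sqrt b)⁻¹ := by
  have hsb : 0 < Real.sqrt b := Real.sqrt_pos.mpr hb
  rcases le_or_gt (|t|) (Real.sqrt b)⁻¹ with h | h
  · have he : Real.exp (-b * t ^ 2) ≤ 1 := Real.exp_le_one_iff.mpr (by nlinarith [sq_nonneg t])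
    calc |t| * Real.exp (-b * t ^ 2) ≤ |t| * 1 :=
          mul_le_mul_of_nonneg_left he (abs_nonneg t)
    _ ≤ (Real.sqrt b)⁻¹ := by simpa using h
  · have ht : 0 < |t| := lt_trans (by positivity) h
    have hsq : 0 < t ^ 2 := by nlinarith [mul_pos ht ht, sq_abs t]
    have hexp : Real.exp (-b * t ^ 2) ≤ (b * t ^ 2)⁻¹ := by
      have h1 : b * t ^ 2 ≤ Real.exp (b * t ^ 2) := by
        nlinarith [Real.add_one_le_exp (b * t ^ 2)]
      rw [show -b * t ^ 2 = -(b * t ^ 2) by ring, Real.exp_neg]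
      exact inv_anti₀ (by positivity) h1
    calc |t| * Real.exp (-b * t ^ 2) ≤ |t| * (b * t ^ 2)⁻¹ :=
          mul_le_mul_of_nonneg_left hexp (abs_nonneg t)
      _ = (b * |t|)⁻¹ := by
          have h4 : b * t ^ 2 = b * |t| * |t| := by rw [← sq_abs]; ring
          rw [h4, mul_inv, mul_comm ((b * |t|)⁻¹) (|t|⁻¹), ← mul_assoc,
            mul_inv_cancel₀ ht.ne', one_mul]
      _ ≤ (Real.sqrt b)⁻¹ := by
          apply inv_anti₀ hsb
          have h2 : Real.sqrt b * Real.sqrt b = b := Real.mul_self_sqrt hb.le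
          have h3 : Real.sqrt b * (Real.sqrt b)⁻¹ < Real.sqrt b * |t| :=
            mul_lt_mul_of_pos_left h hsb
          rw [mul_inv_cancel₀ hsb.ne'] at h3
          nlinarith [hsb]

lemma integrable_abs_mul_exp {b : ℝ} (hb : 0 < b) :
    Integrable (fun t : ℝ => |t| * Real.exp (-b * t ^ 2)) := by
  have h2 : 0 < b / 2 := by positivity
  apply Integrable.mono' ((integrable_exp_neg_mul_sq h2).const_mul ((Real.sqrt (b/2))⁻¹))
  · exact (continuous_abs.mul (by continuity)).aestronglyMeasurable
  · refine ae_of_all _ fun t => ?_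
    have h1 : |t| * Real.exp (-b * t ^ 2)
        = (|t| * Real.exp (-(b/2) * t ^ 2)) * Real.exp (-(b/2) * t ^ 2) := by
      rw [mul_assoc, ← Real.exp_add]; ring_nf
    rw [Real.norm_eq_abs, abs_of_nonneg (by positivity), h1]
    exact mul_le_mul_of_nonneg_right (abs_mul_exp_le h2 t) (Real.exp_pos _).le

lemma integral_Ioi_mul_exp {b : ℝ} (hb : 0 < b) :
    ∫ r in Ioi (0:ℝ), r * Real.exp (-b * r ^ 2) = (2 * b)⁻¹ := by
  have hderiv : ∀ r ∈ Ici (0:ℝ), HasDerivAt (fun r : ℝ => -(2*b)⁻¹ * Real.exp (-b * r ^ 2))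
      (r * Real.exp (-b * r ^ 2)) r := by
    intro r _
    have h1 : HasDerivAt (fun r : ℝ => -b * r ^ 2) (-b * (2 * r)) r := by
      simpa using ((hasDerivAt_pow 2 r).const_mul (-b))
    have := (h1.exp).const_mul (-(2*b)⁻¹)
    refine this.congr_deriv ?_
    field_simp
  have htend : Tendsto (fun r : ℝ => -(2*b)⁻¹ * Real.exp (-b * r ^ 2)) atTop (nhds 0) := by
    have h1 : Tendsto (fun r : ℝ => -b * r ^ 2) atTop atBot := by
      apply Tendsto.const_mul_atTop_of_neg (by linarith : -b < 0)
      exact tendsto_pow_atTop (by norm_num)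
    have := (Real.tendsto_exp_atBot.comp h1).const_mul (-(2*b)⁻¹)
    simpa using this
  have hint : IntegrableOn (fun r : ℝ => r * Real.exp (-b * r ^ 2)) (Ioi 0) :=
    (integrable_mul_exp_neg_mul_sq hb).integrableOn
  have := integral_Ioi_of_hasDerivAt_of_tendsto' hderiv hint htend
  rw [this]; simp

lemma integral_abs_mul_exp {b : ℝ} (hb : 0 < b) :
    ∫ t : ℝ, |t| * Real.exp (-b * t ^ 2) = b⁻¹ := by
  have h := integral_comp_abs (f := fun t : ℝ => t * Real.exp (-b * t ^ 2))
  simp only [sq_abs] at h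
  rw [h, integral_Ioi_mul_exp hb]
  field_simp

lemma integral_max_mul_exp {b : ℝ} (hb : 0 < b) :
    ∫ t : ℝ, max t 0 * Real.exp (-b * t ^ 2) = (2 * b)⁻¹ := by
  have h1 : (fun t : ℝ => max t 0 * Real.exp (-b * t ^ 2))
      = Set.indicator (Ioi 0) (fun t : ℝ => t * Real.exp (-b * t ^ 2)) := by
    funext t
    by_cases ht : t ∈ Ioi (0:ℝ)
    · rw [Set.indicator_of_mem ht, max_eq_left (le_of_lt ht)]
    · rw [Set.indicator_of_notMem ht, max_eq_right (not_lt.mp ht), zero_mul]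
  rw [h1, MeasureTheory.integral_indicator measurableSet_Ioi, integral_Ioi_mul_exp hb]

lemma integrable_max_mul_exp {b : ℝ} (hb : 0 < b) :
    Integrable (fun t : ℝ => max t 0 * Real.exp (-b * t ^ 2)) := by
  apply Integrable.mono' (integrable_abs_mul_exp hb)
  · exact ((continuous_id.max continuous_const).mul (by continuity)).aestronglyMeasurable
  · refine ae_of_all _ fun t => ?_
    rw [Real.norm_eq_abs, abs_mul, abs_of_nonneg (le_max_right t 0),
      abs_of_nonneg (Real.exp_pos _).le]
    exact mul_le_mul_of_nonneg_right (max_le (le_abs_self t) (abs_nonneg t))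
      (Real.exp_pos _).le

noncomputable def kerG (s x z : ℝ) : ℝ :=
  Real.exp (-s) / Real.sqrt (4 * Real.pi * s) * Real.exp (-(x - z) ^ 2 / (4 * s))

noncomputable def kerD (s x z : ℝ) : ℝ :=
  Real.exp (-s) / Real.sqrt (4 * Real.pi * s)
    * (-(x - z) / (2 * s) * Real.exp (-(x - z) ^ 2 / (4 * s)))


lemma kerG_hasDerivAt {s : ℝ} (hs : 0 < s) (z x : ℝ) :
    HasDerivAt (fun x => kerG s x z) (kerD s x z) x := by
  have h0 : HasDerivAt (fun x : ℝ => x - z) 1 x := (hasDerivAt_id x).sub_const z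
  have h1 : HasDerivAt (fun x : ℝ => -(x - z) ^ 2 / (4 * s))
      (-(x - z) / (2 * s)) x := by
    have := ((h0.pow 2).neg).div_const (4 * s)
    refine this.congr_deriv ?_
    field_simp
    ring
  have h2 := (h1.exp).const_mul (Real.exp (-s) / Real.sqrt (4 * Real.pi * s))
  unfold kerG kerD
  refine h2.congr_deriv ?_
  ring

-- shifted gaussian facts, in the exact shapes we need
lemma integrable_gauss {s c : ℝ} (hs : 0 < s) (hc : 0 < c) (x : ℝ) :
    Integrable (fun z : ℝ => Real.exp (-(x - z) ^ 2 / (c * s))) := by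
  have hb : 0 < (c * s)⁻¹ := by positivity
  have h := (integrable_exp_neg_mul_sq hb).comp_sub_right x
  exact h.congr (ae_of_all _ fun z => by simp only []; congr 1; field_simp; ring)

lemma integral_gauss {s : ℝ} (hs : 0 < s) (x : ℝ) :
    ∫ z : ℝ, Real.exp (-(x - z) ^ 2 / (4 * s)) = Real.sqrt (4 * Real.pi * s) := by
  have h1 : (fun z : ℝ => Real.exp (-(x - z) ^ 2 / (4 * s)))
      = fun z : ℝ => Real.exp (-(4 * s)⁻¹ * (z - x) ^ 2) := by
    funext z; congr 1; field_simp; ring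
  rw [h1, integral_sub_right_eq_self (fun w : ℝ => Real.exp (-(4 * s)⁻¹ * w ^ 2)) x,
    integral_gaussian]
  congr 1
  field_simp

lemma kerG_nonneg {s x z : ℝ} : 0 ≤ kerG s x z := by unfold kerG; positivity

lemma contG {s : ℝ} (y : ℝ) {v : ℝ → ℝ} (hv : Continuous v) :
    Continuous fun z => kerG s y z * v z := by
  unfold kerG
  exact (continuous_const.mul (Real.continuous_exp.comp
    ((((continuous_const.sub continuous_id).pow 2).neg).div_const _))).mul hv

lemma contD {s : ℝ} (y : ℝ) {v : ℝ → ℝ} (hv : Continuous v) :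
    Continuous fun z => kerD s y z * v z := by
  unfold kerD
  exact (continuous_const.mul ((((continuous_const.sub continuous_id).neg).div_const _).mul
    (Real.continuous_exp.comp
      ((((continuous_const.sub continuous_id).pow 2).neg).div_const _)))).mul hv

lemma integrable_kerG {s : ℝ} (hs : 0 < s) (x : ℝ) :
    Integrable (fun z => kerG s x z) := by
  unfold kerG
  exact (integrable_gauss hs (by norm_num : (0:ℝ) < 4) x).const_mul _

lemma integral_kerG {s : ℝ} (hs : 0 < s) (x : ℝ) :
    ∫ z, kerG s x z = Real.exp (-s) := by
  unfold kerG
  rw [integral_const_mul, integral_gauss hs x, div_mul_cancel₀]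
  exact (Real.sqrt_pos.mpr (by positivity)).ne'

lemma integrable_kerG_mul {s : ℝ} (hs : 0 < s) (x C₀ : ℝ) {v : ℝ → ℝ} (hv : Continuous v)
    (hv0 : ∀ z, 0 ≤ v z) (hvC : ∀ z, v z ≤ C₀) :
    Integrable (fun z => kerG s x z * v z) := by
  apply Integrable.mono' ((integrable_kerG hs x).mul_const C₀)
  · exact (contG x hv).aestronglyMeasurable
  · refine ae_of_all _ fun z => ?_
    rw [Real.norm_eq_abs, abs_of_nonneg (mul_nonneg kerG_nonneg (hv0 z))]
    exact mul_le_mul_of_nonneg_left (hvC z) kerG_nonneg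

lemma inner_nonneg {s : ℝ} (x : ℝ) {v : ℝ → ℝ} (hv0 : ∀ z, 0 ≤ v z) :
    0 ≤ ∫ z, kerG s x z * v z :=
  integral_nonneg fun z => mul_nonneg kerG_nonneg (hv0 z)

lemma inner_le {s : ℝ} (hs : 0 < s) (x C₀ : ℝ) {v : ℝ → ℝ} (hv : Continuous v)
    (hv0 : ∀ z, 0 ≤ v z) (hvC : ∀ z, v z ≤ C₀) :
    ∫ z, kerG s x z * v z ≤ C₀ * Real.exp (-s) := by
  have h := integral_mono (integrable_kerG_mul hs x C₀ hv hv0 hvC)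
    ((integrable_kerG hs x).mul_const C₀)
    (fun z => mul_le_mul_of_nonneg_left (hvC z) kerG_nonneg)
  rw [integral_mul_const, integral_kerG hs x] at h
  linarith

lemma inner_hasDerivAt {s : ℝ} (hs : 0 < s) (x C₀ : ℝ) {v : ℝ → ℝ} (hv : Continuous v)
    (hv0 : ∀ z, 0 ≤ v z) (hvC : ∀ z, v z ≤ C₀) :
    Integrable (fun z => kerD s x z * v z) ∧
      HasDerivAt (fun y => ∫ z, kerG s y z * v z) (∫ z, kerD s x z * v z) x := by
  have hC₀ : 0 ≤ C₀ := le_trans (hv0 0) (hvC 0)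
  have hsq : 0 < Real.sqrt (4 * Real.pi * s) := Real.sqrt_pos.mpr (by positivity)
  have hsp : 0 < Real.sqrt s := Real.sqrt_pos.mpr hs
  have hA0 : 0 ≤ Real.exp (-s) / Real.sqrt (4 * Real.pi * s) := by positivity
  apply hasDerivAt_integral_of_dominated_loc_of_deriv_le
    (F := fun y z => kerG s y z * v z) (F' := fun y z => kerD s y z * v z)
    (bound := fun z => Real.exp (-s) / Real.sqrt (4 * Real.pi * s)
      * (3 * Real.sqrt s / (2 * s)) * Real.exp (1 / (8 * s)) * C₀
      * Real.exp (-(x - z) ^ 2 / (16 * s)))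
    (s := Metric.ball x 1) (Metric.ball_mem_nhds x one_pos)
  · exact Eventually.of_forall fun y => (contG y hv).aestronglyMeasurable
  · exact integrable_kerG_mul hs x C₀ hv hv0 hvC
  · exact (contD x hv).aestronglyMeasurable
  · -- key bound
    refine ae_of_all _ fun z y hy => ?_
    have hyx : (x - y) ^ 2 ≤ 1 := by
      have h := Metric.mem_ball.mp hy
      rw [Real.dist_eq] at h
      nlinarith [sq_abs (y - x), abs_nonneg (y - x)]
    have habs : ‖kerD s y z * v z‖
        = Real.exp (-s) / Real.sqrt (4 * Real.pi * s)
          * (|y - z| / (2 * s) * Real.exp (-(y - z) ^ 2 / (4 * s))) * |v z| := by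
      rw [Real.norm_eq_abs]
      unfold kerD
      rw [abs_mul, abs_mul, abs_mul, abs_div, abs_div, abs_neg,
        abs_of_nonneg (Real.exp_pos (-s)).le, abs_of_nonneg hsq.le,
        abs_of_nonneg (by positivity : (0:ℝ) ≤ 2 * s),
        abs_of_nonneg (Real.exp_pos _).le]
    have key1 : |y - z| * Real.exp (-(y - z) ^ 2 / (8 * s)) ≤ 3 * Real.sqrt s := by
      have h8 : 0 < ((8:ℝ) * s)⁻¹ := by positivity
      have h := abs_mul_exp_le h8 (y - z)
      rw [show -((8:ℝ) * s)⁻¹ * (y - z) ^ 2 = -(y - z) ^ 2 / (8 * s) by ring] at h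
      have h9 : (Real.sqrt (((8:ℝ) * s)⁻¹))⁻¹ = Real.sqrt (8 * s) := by
        rw [Real.sqrt_inv, inv_inv]
      have h10 : Real.sqrt (8 * s) ≤ 3 * Real.sqrt s := by
        rw [Real.sqrt_mul (by norm_num : (0:ℝ) ≤ 8)]
        have h11 : Real.sqrt 8 ≤ 3 := by
          rw [show (3:ℝ) = Real.sqrt 9 by
            rw [show (9:ℝ) = 3 ^ 2 by norm_num, Real.sqrt_sq (by norm_num : (0:ℝ) ≤ 3)]]
          exact Real.sqrt_le_sqrt (by norm_num)
        exact mul_le_mul_of_nonneg_right h11 (Real.sqrt_nonneg s)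
      rw [h9] at h
      linarith
    have h2 : |y - z| / (2 * s) * Real.exp (-(y - z) ^ 2 / (4 * s))
        ≤ 3 * Real.sqrt s / (2 * s) * Real.exp (-(y - z) ^ 2 / (8 * s)) := by
      calc |y - z| / (2 * s) * Real.exp (-(y - z) ^ 2 / (4 * s))
          = |y - z| * Real.exp (-(y - z) ^ 2 / (8 * s))
            * Real.exp (-(y - z) ^ 2 / (8 * s)) / (2 * s) := by
            rw [show -(y - z) ^ 2 / (4 * s)
              = -(y - z) ^ 2 / (8 * s) + -(y - z) ^ 2 / (8 * s) by ring, Real.exp_add]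
            ring
        _ ≤ 3 * Real.sqrt s * Real.exp (-(y - z) ^ 2 / (8 * s)) / (2 * s) := by
            gcongr
        _ = 3 * Real.sqrt s / (2 * s) * Real.exp (-(y - z) ^ 2 / (8 * s)) := by ring
    have h3 : Real.exp (-(y - z) ^ 2 / (8 * s))
        ≤ Real.exp (1 / (8 * s)) * Real.exp (-(x - z) ^ 2 / (16 * s)) := by
      rw [← Real.exp_add]
      apply Real.exp_le_exp.mpr
      have hnum : (x - z) ^ 2 ≤ 2 + 2 * (y - z) ^ 2 := by
        nlinarith [sq_nonneg ((x - y) - (y - z)), hyx]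
      have heq : 1 / (8 * s) + -(x - z) ^ 2 / (16 * s) = (2 + -(x - z) ^ 2) / (16 * s) := by
        field_simp
        ring
      rw [heq, div_le_div_iff₀ (by positivity : (0:ℝ) < 8 * s) (by positivity : (0:ℝ) < 16 * s)]
      nlinarith [hs.le, hnum]
    have hvz : |v z| ≤ C₀ := by rw [abs_of_nonneg (hv0 z)]; exact hvC z
    rw [habs]
    calc Real.exp (-s) / Real.sqrt (4 * Real.pi * s)
          * (|y - z| / (2 * s) * Real.exp (-(y - z) ^ 2 / (4 * s))) * |v z|
        ≤ Real.exp (-s) / Real.sqrt (4 * Real.pi * s)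
          * (3 * Real.sqrt s / (2 * s) * Real.exp (-(y - z) ^ 2 / (8 * s))) * C₀ := by
          gcongr
      _ ≤ Real.exp (-s) / Real.sqrt (4 * Real.pi * s)
          * (3 * Real.sqrt s / (2 * s)
            * (Real.exp (1 / (8 * s)) * Real.exp (-(x - z) ^ 2 / (16 * s)))) * C₀ := by
          gcongr
      _ = Real.exp (-s) / Real.sqrt (4 * Real.pi * s) * (3 * Real.sqrt s / (2 * s))
          * Real.exp (1 / (8 * s)) * C₀ * Real.exp (-(x - z) ^ 2 / (16 * s)) := by ring
  · exact (integrable_gauss hs (by norm_num : (0:ℝ) < 16) x).const_mul _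
  · exact ae_of_all _ fun z y _ => (kerG_hasDerivAt hs z y).mul_const (v z)


lemma integrable_kerD_mul {s : ℝ} (hs : 0 < s) (x C₀ : ℝ) {v : ℝ → ℝ} (hv : Continuous v)
    (hv0 : ∀ z, 0 ≤ v z) (hvC : ∀ z, v z ≤ C₀) :
    Integrable (fun z => kerD s x z * v z) :=
  (inner_hasDerivAt hs x C₀ hv hv0 hvC).1

lemma sqrt4pis {s : ℝ} (hs : 0 < s) :
    Real.sqrt (4 * Real.pi * s) = 2 * Real.sqrt (Real.pi * s) := by
  rw [show (4:ℝ) * Real.pi * s = 2 ^ 2 * (Real.pi * s) by ring,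
    Real.sqrt_mul (by positivity), Real.sqrt_sq (by norm_num : (0:ℝ) ≤ 2)]

lemma integrable_abs_shift {s : ℝ} (hs : 0 < s) (x : ℝ) :
    Integrable (fun z : ℝ => |x - z| * Real.exp (-(x - z) ^ 2 / (4 * s))) := by
  have h := (integrable_abs_mul_exp (b := ((4:ℝ) * s)⁻¹) (by positivity)).comp_sub_right x
  exact h.congr (ae_of_all _ fun z => by
    simp only []
    rw [show |x - z| = |z - x| from abs_sub_comm x z]
    congr 1
    ring)

lemma integral_abs_shift {s : ℝ} (hs : 0 < s) (x : ℝ) :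
    ∫ z : ℝ, |x - z| * Real.exp (-(x - z) ^ 2 / (4 * s)) = 4 * s := by
  have h1 : (fun z : ℝ => |x - z| * Real.exp (-(x - z) ^ 2 / (4 * s)))
      = fun z : ℝ => (fun t : ℝ => |t| * Real.exp (-((4 * s)⁻¹) * t ^ 2)) (z - x) := by
    funext z
    simp only []
    rw [show |x - z| = |z - x| from abs_sub_comm x z]
    congr 1
    ring
  rw [h1, integral_sub_right_eq_self (fun t : ℝ => |t| * Real.exp (-((4 * s)⁻¹) * t ^ 2)) x,
    integral_abs_mul_exp (by positivity), inv_inv]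

lemma integrable_max_shift {s : ℝ} (hs : 0 < s) (x : ℝ) :
    Integrable (fun z : ℝ => max (z - x) 0 * Real.exp (-(x - z) ^ 2 / (4 * s))) := by
  have h := (integrable_max_mul_exp (b := ((4:ℝ) * s)⁻¹) (by positivity)).comp_sub_right x
  exact h.congr (ae_of_all _ fun z => by
    simp only []
    congr 1
    ring_nf)

lemma integral_max_shift {s : ℝ} (hs : 0 < s) (x : ℝ) :
    ∫ z : ℝ, max (z - x) 0 * Real.exp (-(x - z) ^ 2 / (4 * s)) = 2 * s := by
  have h1 : (fun z : ℝ => max (z - x) 0 * Real.exp (-(x - z) ^ 2 / (4 * s)))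
      = fun z : ℝ => (fun t : ℝ => max t 0 * Real.exp (-((4 * s)⁻¹) * t ^ 2)) (z - x) := by
    funext z
    simp only []
    congr 1
    ring_nf
  rw [h1, integral_sub_right_eq_self (fun t : ℝ => max t 0 * Real.exp (-((4 * s)⁻¹) * t ^ 2)) x,
    integral_max_mul_exp (by positivity)]
  field_simp
  ring

lemma innerD_abs_le {s : ℝ} (hs : 0 < s) (x C₀ : ℝ) {v : ℝ → ℝ} (hv : Continuous v)
    (hv0 : ∀ z, 0 ≤ v z) (hvC : ∀ z, v z ≤ C₀) :
    |∫ z, kerD s x z * v z| ≤ C₀ * Real.exp (-s) / Real.sqrt (Real.pi * s) := by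
  have hC₀ : 0 ≤ C₀ := le_trans (hv0 0) (hvC 0)
  have hsq : 0 < Real.sqrt (4 * Real.pi * s) := Real.sqrt_pos.mpr (by positivity)
  have h1 : |∫ z, kerD s x z * v z| ≤ ∫ z, ‖kerD s x z * v z‖ := by
    rw [← Real.norm_eq_abs]
    exact norm_integral_le_integral_norm _
  have h2 : ∀ z, ‖kerD s x z * v z‖
      ≤ Real.exp (-s) / Real.sqrt (4 * Real.pi * s) / (2 * s) * C₀
        * (|x - z| * Real.exp (-(x - z) ^ 2 / (4 * s))) := by
    intro z
    have e1 : ‖kerD s x z * v z‖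
        = Real.exp (-s) / Real.sqrt (4 * Real.pi * s) / (2 * s)
          * (|x - z| * Real.exp (-(x - z) ^ 2 / (4 * s))) * |v z| := by
      rw [Real.norm_eq_abs]
      unfold kerD
      rw [abs_mul, abs_mul, abs_mul, abs_div, abs_div, abs_neg,
        abs_of_nonneg (Real.exp_pos (-s)).le, abs_of_nonneg hsq.le,
        abs_of_nonneg (by positivity : (0:ℝ) ≤ 2 * s),
        abs_of_nonneg (Real.exp_pos _).le]
      ring
    rw [e1]
    have hvz : |v z| ≤ C₀ := by rw [abs_of_nonneg (hv0 z)]; exact hvC z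
    calc Real.exp (-s) / Real.sqrt (4 * Real.pi * s) / (2 * s)
          * (|x - z| * Real.exp (-(x - z) ^ 2 / (4 * s))) * |v z|
        ≤ Real.exp (-s) / Real.sqrt (4 * Real.pi * s) / (2 * s)
          * (|x - z| * Real.exp (-(x - z) ^ 2 / (4 * s))) * C₀ := by gcongr
      _ = Real.exp (-s) / Real.sqrt (4 * Real.pi * s) / (2 * s) * C₀
          * (|x - z| * Real.exp (-(x - z) ^ 2 / (4 * s))) := by ring
  have h3 : ∫ z, ‖kerD s x z * v z‖
      ≤ ∫ z, Real.exp (-s) / Real.sqrt (4 * Real.pi * s) / (2 * s) * C₀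
        * (|x - z| * Real.exp (-(x - z) ^ 2 / (4 * s))) := by
    apply integral_mono (integrable_kerD_mul hs x C₀ hv hv0 hvC).norm
      (((integrable_abs_shift hs x)).const_mul _) h2
  have h4 : ∫ z, Real.exp (-s) / Real.sqrt (4 * Real.pi * s) / (2 * s) * C₀
        * (|x - z| * Real.exp (-(x - z) ^ 2 / (4 * s)))
      = C₀ * Real.exp (-s) / Real.sqrt (Real.pi * s) := by
    rw [integral_const_mul, integral_abs_shift hs x, sqrt4pis hs]
    field_simp
    ring
  linarith

lemma innerD_le {s : ℝ} (hs : 0 < s) (x C₀ : ℝ) {v : ℝ → ℝ} (hv : Continuous v)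
    (hv0 : ∀ z, 0 ≤ v z) (hvC : ∀ z, v z ≤ C₀) :
    ∫ z, kerD s x z * v z ≤ C₀ * Real.exp (-s) / (2 * Real.sqrt (Real.pi * s)) := by
  have hC₀ : 0 ≤ C₀ := le_trans (hv0 0) (hvC 0)
  have hsq : 0 < Real.sqrt (4 * Real.pi * s) := Real.sqrt_pos.mpr (by positivity)
  have h2 : ∀ z, kerD s x z * v z
      ≤ Real.exp (-s) / Real.sqrt (4 * Real.pi * s) / (2 * s) * C₀
        * (max (z - x) 0 * Real.exp (-(x - z) ^ 2 / (4 * s))) := by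
    intro z
    have key : -(x - z) * v z ≤ max (z - x) 0 * C₀ := by
      rcases le_or_gt z x with h | h
      · rw [max_eq_right (by linarith : z - x ≤ 0)]
        have : -(x - z) * v z ≤ 0 :=
          mul_nonpos_of_nonpos_of_nonneg (by linarith) (hv0 z)
        linarith
      · rw [max_eq_left (by linarith : (0:ℝ) ≤ z - x)]
        have e : -(x - z) = z - x := by ring
        rw [e]
        exact mul_le_mul (le_refl _) (hvC z) (hv0 z) (by linarith)
    have e1 : kerD s x z * v z
        = Real.exp (-s) / Real.sqrt (4 * Real.pi * s) * Real.exp (-(x - z) ^ 2 / (4 * s))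
          / (2 * s) * (-(x - z) * v z) := by
      unfold kerD; ring
    have e2 : Real.exp (-s) / Real.sqrt (4 * Real.pi * s) / (2 * s) * C₀
        * (max (z - x) 0 * Real.exp (-(x - z) ^ 2 / (4 * s)))
        = Real.exp (-s) / Real.sqrt (4 * Real.pi * s) * Real.exp (-(x - z) ^ 2 / (4 * s))
          / (2 * s) * (max (z - x) 0 * C₀) := by ring
    rw [e1, e2]
    exact mul_le_mul_of_nonneg_left key (by positivity)
  have h3 : ∫ z, kerD s x z * v z
      ≤ ∫ z, Real.exp (-s) / Real.sqrt (4 * Real.pi * s) / (2 * s) * C₀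
        * (max (z - x) 0 * Real.exp (-(x - z) ^ 2 / (4 * s))) :=
    integral_mono (integrable_kerD_mul hs x C₀ hv hv0 hvC)
      ((integrable_max_shift hs x).const_mul _) h2
  have h4 : ∫ z, Real.exp (-s) / Real.sqrt (4 * Real.pi * s) / (2 * s) * C₀
        * (max (z - x) 0 * Real.exp (-(x - z) ^ 2 / (4 * s)))
      = C₀ * Real.exp (-s) / (2 * Real.sqrt (Real.pi * s)) := by
    rw [integral_const_mul, integral_max_shift hs x, sqrt4pis hs]
    field_simp
  linarith

lemma measG (τ c x : ℝ) {u : ℝ → ℝ} (hu : Continuous u) :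
    StronglyMeasurable fun p : ℝ × ℝ => kerG p.1 x p.2 * u (p.2 + τ * c * p.1) := by
  apply Measurable.stronglyMeasurable
  apply Measurable.mul
  · apply Measurable.mul
    · exact (Real.measurable_exp.comp measurable_fst.neg).div
        (Real.continuous_sqrt.measurable.comp (measurable_fst.const_mul (4 * Real.pi)))
    · exact Real.measurable_exp.comp
        ((((measurable_const.sub measurable_snd).pow_const 2).neg).div
          (measurable_fst.const_mul 4))
  · exact hu.measurable.comp (measurable_snd.add (measurable_fst.const_mul (τ * c)))

lemma measD (τ c x : ℝ) {u : ℝ → ℝ} (hu : Continuous u) :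
    StronglyMeasurable fun p : ℝ × ℝ => kerD p.1 x p.2 * u (p.2 + τ * c * p.1) := by
  apply Measurable.stronglyMeasurable
  apply Measurable.mul
  · apply Measurable.mul
    · exact (Real.measurable_exp.comp measurable_fst.neg).div
        (Real.continuous_sqrt.measurable.comp (measurable_fst.const_mul (4 * Real.pi)))
    · exact (((measurable_const.sub measurable_snd).neg).div
        (measurable_fst.const_mul 2)).mul
        (Real.measurable_exp.comp
          ((((measurable_const.sub measurable_snd).pow_const 2).neg).div
            (measurable_fst.const_mul 4)))
  · exact hu.measurable.comp (measurable_snd.add (measurable_fst.const_mul (τ * c)))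

lemma eqon_gamma : EqOn (fun s : ℝ => (Real.sqrt Real.pi)⁻¹ * (Real.exp (-s) * s ^ ((1:ℝ)/2 - 1)))
    (fun s => Real.exp (-s) / Real.sqrt (Real.pi * s)) (Ioi 0) := by
  intro s hs
  have hs0 : (0:ℝ) < s := hs
  have hπ : (0:ℝ) < Real.sqrt Real.pi := Real.sqrt_pos.mpr Real.pi_pos
  have hss : (0:ℝ) < Real.sqrt s := Real.sqrt_pos.mpr hs0
  simp only []
  rw [Real.sqrt_mul Real.pi_pos.le, show ((1:ℝ)/2 - 1) = -(1/2) by norm_num,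
    Real.rpow_neg hs0.le, ← Real.sqrt_eq_rpow]
  field_simp

lemma integrable_exp_div_sqrt :
    IntegrableOn (fun s => Real.exp (-s) / Real.sqrt (Real.pi * s)) (Ioi (0:ℝ)) := by
  have h := (Real.GammaIntegral_convergent (by norm_num : (0:ℝ) < 1/2)).const_mul
    ((Real.sqrt Real.pi)⁻¹)
  exact IntegrableOn.congr_fun h eqon_gamma measurableSet_Ioi

lemma integral_exp_div_sqrt :
    ∫ s in Ioi (0:ℝ), Real.exp (-s) / Real.sqrt (Real.pi * s) = 1 := by
  have h2 : ∫ s in Ioi (0:ℝ), Real.exp (-s) / Real.sqrt (Real.pi * s)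
      = ∫ s in Ioi (0:ℝ), (Real.sqrt Real.pi)⁻¹ * (Real.exp (-s) * s ^ ((1:ℝ)/2 - 1)) :=
    (setIntegral_congr_fun measurableSet_Ioi eqon_gamma).symm
  rw [h2, integral_const_mul, ← Real.Gamma_eq_integral (by norm_num : (0:ℝ) < 1/2),
    Real.Gamma_one_half_eq]
  exact inv_mul_cancel₀ (Real.sqrt_pos.mpr Real.pi_pos).ne'

lemma Vfun_deriv (τ c C₀ : ℝ) {u : ℝ → ℝ} (hu : Continuous u)
    (hu0 : ∀ z, 0 ≤ u z) (huC : ∀ z, u z ≤ C₀) (x : ℝ) :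
    IntegrableOn (fun s => ∫ z, kerD s x z * u (z + τ * c * s)) (Ioi 0) ∧
      HasDerivAt (fun y => ∫ s in Ioi (0:ℝ), ∫ z, kerG s y z * u (z + τ * c * s))
        (∫ s in Ioi (0:ℝ), ∫ z, kerD s x z * u (z + τ * c * s)) x := by
  have hC₀ : 0 ≤ C₀ := le_trans (hu0 0) (huC 0)
  have hv : ∀ s : ℝ, Continuous fun z => u (z + τ * c * s) :=
    fun s => hu.comp (continuous_id.add continuous_const)
  apply hasDerivAt_integral_of_dominated_loc_of_deriv_le
    (F := fun y s => ∫ z, kerG s y z * u (z + τ * c * s))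
    (F' := fun y s => ∫ z, kerD s y z * u (z + τ * c * s))
    (bound := fun s => C₀ * Real.exp (-s) / Real.sqrt (Real.pi * s))
    (s := Metric.ball x 1) (Metric.ball_mem_nhds x one_pos)
  · exact Eventually.of_forall fun y =>
      ((measG τ c y hu).integral_prod_right').aestronglyMeasurable.restrict
  · apply Integrable.mono' (g := fun s : ℝ => C₀ * Real.exp (-s))
    · have h := (exp_neg_integrableOn_Ioi 0 (b := 1) one_pos).const_mul C₀
      simpa using h
    · exact ((measG τ c x hu).integral_prod_right').aestronglyMeasurable.restrict
    · rw [ae_restrict_iff' measurableSet_Ioi]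
      refine ae_of_all _ fun s hs => ?_
      rw [Real.norm_eq_abs, abs_of_nonneg (inner_nonneg x (fun z => hu0 _))]
      exact inner_le hs x C₀ (hv s) (fun z => hu0 _) (fun z => huC _)
  · exact ((measD τ c x hu).integral_prod_right').aestronglyMeasurable.restrict
  · rw [ae_restrict_iff' measurableSet_Ioi]
    refine ae_of_all _ fun s hs y _ => ?_
    rw [Real.norm_eq_abs]
    exact innerD_abs_le hs y C₀ (hv s) (fun z => hu0 _) (fun z => huC _)
  · have h := integrable_exp_div_sqrt.const_mul C₀
    exact h.congr (ae_of_all _ fun s => by simp only []; ring)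
  · rw [ae_restrict_iff' measurableSet_Ioi]
    refine ae_of_all _ fun s hs y _ => ?_
    exact (inner_hasDerivAt hs y C₀ (hv s) (fun z => hu0 _) (fun z => huC _)).2

lemma Vfun_eq (τ c : ℝ) (u : ℝ → ℝ) :
    Vfun τ c u = fun x => ∫ s in Ioi (0:ℝ), ∫ z, kerG s x z * u (z + τ * c * s) := rfl

lemma D_le (τ c C₀ : ℝ) {u : ℝ → ℝ} (hu : Continuous u)
    (hu0 : ∀ z, 0 ≤ u z) (huC : ∀ z, u z ≤ C₀) (x : ℝ) :
    ∫ s in Ioi (0:ℝ), (∫ z, kerD s x z * u (z + τ * c * s)) ≤ C₀ / 2 := by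
  have hv : ∀ s : ℝ, Continuous fun z => u (z + τ * c * s) :=
    fun s => hu.comp (continuous_id.add continuous_const)
  have heq : (fun s : ℝ => C₀ * Real.exp (-s) / (2 * Real.sqrt (Real.pi * s)))
      = fun s : ℝ => (C₀ / 2) * (Real.exp (-s) / Real.sqrt (Real.pi * s)) :=
    funext fun s => by ring
  have h1 : ∫ s in Ioi (0:ℝ), (∫ z, kerD s x z * u (z + τ * c * s))
      ≤ ∫ s in Ioi (0:ℝ), C₀ * Real.exp (-s) / (2 * Real.sqrt (Real.pi * s)) := by
    apply setIntegral_mono_on (Vfun_deriv τ c C₀ hu hu0 huC x).1 _ measurableSet_Ioi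
    · exact fun s hs => innerD_le hs x C₀ (hv s) (fun z => hu0 _) (fun z => huC _)
    · rw [heq]
      exact integrable_exp_div_sqrt.const_mul _
  have h2 : ∫ s in Ioi (0:ℝ), C₀ * Real.exp (-s) / (2 * Real.sqrt (Real.pi * s)) = C₀ / 2 := by
    rw [heq, integral_const_mul, integral_exp_div_sqrt, mul_one]
  linarith


/-- under condition (H), for `C₀ ≥ C̃₀ = a/(b−χ(1+τc_μ/2))` the
constant `C₀` is a super-solution: `(a − χ(V(x;u) − τc_μ V'(x;u)) − (b−χ)C₀)·C₀ ≤ 0`. -/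
theorem const_supersolution (a b τ χ μ : ℝ) (ha : 0 < a) (hb : 0 < b)
    (hτ : 0 < τ) (hχ0 : 0 < χ) (hχ1 : χ < 1)
    (hμ0 : 0 < μ) (hμ : μ < muTau a τ) (hH : condH a b τ μ χ)
    (C₀ : ℝ) (hC₀ : a / (b - χ * (1 + τ * cmu a μ / 2)) ≤ C₀)
    (μt d : ℝ) (hμt₁ : μ < μt) (hμt₂ : μt < min (2 * μ) (muTau a τ))
    (hd : max 1 (C₀ ^ ((μ - μt) / μ)) < d)
    (u : ℝ → ℝ) (hu : memE μ C₀ μt d u) :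
    ∀ x : ℝ,
      (a - χ * (Vfun τ (cmu a μ) u x - τ * cmu a μ * deriv (Vfun τ (cmu a μ) u) x)
        - (b - χ) * C₀) * C₀ ≤ 0 := by
  intro x
  set c := cmu a μ with hc
  have hcpos : 0 < c := add_pos hμ0 (div_pos ha hμ0)
  have htc : 0 < τ * c := mul_pos hτ hcpos
  have hH1 : (1 + τ * c) * χ < b - χ := (lt_div_iff₀ hχ0).mp hH.1
  have hdenom : 0 < b - χ * (1 + τ * c / 2) := by nlinarith
  have hC0pos : 0 < C₀ := lt_of_lt_of_le (div_pos ha hdenom) hC₀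
  have hucont : Continuous u := hu.1.continuous
  have hu0 : ∀ z, 0 ≤ u z := fun z => le_trans (le_max_left 0 _) (hu.2 z).1
  have huC : ∀ z, u z ≤ C₀ := fun z => le_trans (hu.2 z).2 (min_le_left _ _)
  have hVd := Vfun_deriv τ c C₀ hucont hu0 huC x
  have hDle := D_le τ c C₀ hucont hu0 huC x
  have hV0 : 0 ≤ Vfun τ c u x := by
    rw [Vfun_eq]
    exact setIntegral_nonneg measurableSet_Ioi fun s _ => inner_nonneg x (fun z => hu0 _)
  have hderiv : HasDerivAt (Vfun τ c u)
      (∫ s in Ioi (0:ℝ), ∫ z, kerD s x z * u (z + τ * c * s)) x := by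
    rw [Vfun_eq]
    exact hVd.2
  rw [hderiv.deriv]
  set D := ∫ s in Ioi (0:ℝ), ∫ z, kerD s x z * u (z + τ * c * s)
  have ha2 : a ≤ C₀ * (b - χ * (1 + τ * c / 2)) := (div_le_iff₀ hdenom).mp hC₀
  have hE : a - χ * (Vfun τ c u x - τ * c * D) - (b - χ) * C₀ ≤ 0 := by
    nlinarith [mul_nonneg hχ0.le hV0,
      mul_le_mul_of_nonneg_left hDle (mul_nonneg hχ0.le htc.le)]
  nlinarith [mul_nonneg (neg_nonneg.mpr hE) hC0pos.le]
end

section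
/- Let C₀>0, τ>0 and 0<μ<μ_τ, and let u ∈ ℰ_{τ,μ}(C₀). Then for every x∈ℝ: 0 ≤ V(x;u) ≤ V⁺(x), where V⁺(x) = min{C₀, e^{−μx}/(1+τμc_μ−μ²)}. -/
open Real Filter MeasureTheory Set Topology

lemma integral_exp_neg_mul_Ioi {β : ℝ} (hβ : 0 < β) :
    ∫ s in Set.Ioi (0:ℝ), Real.exp (-β * s) = 1 / β := by
  have hderiv : ∀ x ∈ Ici (0:ℝ),
      HasDerivAt (fun s : ℝ => -Real.exp (-β * s) / β) (Real.exp (-β * x)) x := by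
    intro x _
    have h1 : HasDerivAt (fun s : ℝ => -β * s) (-β) x := by
      simpa using (hasDerivAt_id x).const_mul (-β)
    have h2 := ((h1.exp).neg).div_const β
    refine h2.congr_deriv ?_
    field_simp
  have hint : IntegrableOn (fun s : ℝ => Real.exp (-β * s)) (Ioi (0:ℝ)) :=
    exp_neg_integrableOn_Ioi 0 hβ
  have h0 : Tendsto (fun s : ℝ => -β * s) atTop atBot := by
    have h1 : Tendsto (fun s : ℝ => β * s) atTop atTop :=
      tendsto_id.const_mul_atTop hβ (f := fun x : ℝ => x)
    exact Tendsto.congr (fun s => by simp [Function.comp, neg_mul])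
      (tendsto_neg_atTop_atBot.comp h1)
  have htend : Tendsto (fun s : ℝ => -Real.exp (-β * s) / β) atTop (𝓝 0) := by
    have h3 : Tendsto (fun s : ℝ => Real.exp (-β * s)) atTop (𝓝 0) :=
      Real.tendsto_exp_atBot.comp h0
    simpa using (h3.neg).div_const β
  have := integral_Ioi_of_hasDerivAt_of_tendsto' hderiv hint htend
  rw [this]
  simp
  field_simp

lemma gauss_shift (s m : ℝ) (hs : 0 < s) :
    ∫ z : ℝ, Real.exp (-(z - m) ^ 2 / (4 * s)) = Real.sqrt (4 * Real.pi * s) := by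
  have h1 : (fun z : ℝ => Real.exp (-(z - m) ^ 2 / (4 * s)))
      = fun z : ℝ => Real.exp (-(1 / (4 * s)) * (z - m) ^ 2) := by
    funext z; congr 1; field_simp
  rw [h1,
    MeasureTheory.integral_sub_right_eq_self (fun z : ℝ => Real.exp (-(1 / (4 * s)) * z ^ 2)) m,
    integral_gaussian]
  congr 1
  field_simp

lemma gauss_integrable (s m : ℝ) (hs : 0 < s) :
    Integrable (fun z : ℝ => Real.exp (-(z - m) ^ 2 / (4 * s))) := by
  have h1 : (fun z : ℝ => Real.exp (-(z - m) ^ 2 / (4 * s)))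
      = fun z : ℝ => Real.exp (-(1 / (4 * s)) * (z - m) ^ 2) := by
    funext z; congr 1; field_simp
  rw [h1]
  exact (integrable_exp_neg_mul_sq (by positivity)).comp_sub_right m

/-- Lemma 3.2: for `u ∈ ℰ_{τ,μ}(C₀)`,
`0 ≤ V(x;u) ≤ V⁺(x) = min{C₀, e^{−μx}/(1+τμc_μ−μ²)}`. -/
theorem Vfun_bounds (a b τ μ : ℝ) (ha : 0 < a) (hb : 0 < b) (hτ : 0 < τ)
    (hμ0 : 0 < μ) (hμ : μ < muTau a τ)
    (C₀ : ℝ) (hC₀ : 0 < C₀)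
    (μt d : ℝ) (hμt₁ : μ < μt) (hμt₂ : μt < min (2 * μ) (muTau a τ))
    (hd : max 1 (C₀ ^ ((μ - μt) / μ)) < d)
    (u : ℝ → ℝ) (hu : memE μ C₀ μt d u) :
    ∀ x : ℝ, 0 ≤ Vfun τ (cmu a μ) u x ∧
      Vfun τ (cmu a μ) u x
        ≤ min C₀ (Real.exp (-μ * x) / (1 + τ * μ * cmu a μ - μ ^ 2)) := by
  obtain ⟨-, huB⟩ := hu
  have hu0 : ∀ y, 0 ≤ u y := fun y => le_trans (le_max_left _ _) (huB y).1
  have huC : ∀ y, u y ≤ C₀ := fun y => le_trans (huB y).2 (min_le_left _ _)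
  have huE : ∀ y, u y ≤ Real.exp (-μ * y) := fun y => le_trans (huB y).2 (min_le_right _ _)
  have hμc : τ * μ * cmu a μ = τ * μ ^ 2 + τ * a := by
    unfold cmu; field_simp
  have hβ : 0 < 1 + τ * μ * cmu a μ - μ ^ 2 := by
    rw [hμc]
    by_cases h1 : 1 ≤ τ
    · nlinarith [sq_nonneg μ]
    · push_neg at h1
      have hμ' : μ < Real.sqrt ((1 + τ * a) / (1 - τ)) := by
        have hmt : muTau a τ = min (Real.sqrt a) (Real.sqrt ((1 + τ * a) / (1 - τ))) := by
          unfold muTau; rw [if_neg (not_le.mpr h1)]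
        rw [hmt] at hμ
        exact lt_of_lt_of_le hμ (min_le_right _ _)
      have h2 : μ ^ 2 < (1 + τ * a) / (1 - τ) := (Real.lt_sqrt hμ0.le).mp hμ'
      have h3 : (0:ℝ) < 1 - τ := by linarith
      have h4 : μ ^ 2 * (1 - τ) < 1 + τ * a := (lt_div_iff₀ h3).mp h2
      nlinarith
  intro x
  set c := cmu a μ with hcdef
  set β := 1 + τ * μ * c - μ ^ 2 with hβdef
  have hK0 : ∀ s z : ℝ,
      0 ≤ Real.exp (-s) / Real.sqrt (4 * Real.pi * s) * Real.exp (-(x - z) ^ 2 / (4 * s)) := by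
    intro s z; positivity
  have hInn0 : ∀ s : ℝ, 0 ≤ ∫ z : ℝ,
      Real.exp (-s) / Real.sqrt (4 * Real.pi * s) * Real.exp (-(x - z) ^ 2 / (4 * s))
        * u (z + τ * c * s) :=
    fun s => integral_nonneg fun z => mul_nonneg (hK0 s z) (hu0 _)
  have hsqrt : ∀ s : ℝ, 0 < s → 0 < Real.sqrt (4 * Real.pi * s) := by
    intro s hs
    exact Real.sqrt_pos.mpr (by positivity)
  have hInnC : ∀ s : ℝ, s ∈ Ioi (0:ℝ) → (∫ z : ℝ,
      Real.exp (-s) / Real.sqrt (4 * Real.pi * s) * Real.exp (-(x - z) ^ 2 / (4 * s))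
        * u (z + τ * c * s)) ≤ Real.exp (-s) * C₀ := by
    intro s hs
    rw [mem_Ioi] at hs
    have hg : Integrable (fun z : ℝ =>
        (Real.exp (-s) / Real.sqrt (4 * Real.pi * s) * C₀) * Real.exp (-(z - x) ^ 2 / (4 * s))) :=
      (gauss_integrable s x hs).const_mul _
    have hle : ∀ z : ℝ,
        Real.exp (-s) / Real.sqrt (4 * Real.pi * s) * Real.exp (-(x - z) ^ 2 / (4 * s))
          * u (z + τ * c * s)
        ≤ (Real.exp (-s) / Real.sqrt (4 * Real.pi * s) * C₀) * Real.exp (-(z - x) ^ 2 / (4 * s)) := by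
      intro z
      refine le_trans (mul_le_mul_of_nonneg_left (huC _) (hK0 s z)) (le_of_eq ?_)
      have hsq : (-(x - z) ^ 2 / (4 * s)) = (-(z - x) ^ 2 / (4 * s)) := by ring
      rw [hsq]; ring
    have h := integral_mono_of_nonneg
      (Eventually.of_forall fun z => mul_nonneg (hK0 s z) (hu0 _)) hg (Eventually.of_forall hle)
    refine h.trans_eq ?_
    rw [integral_const_mul, gauss_shift s x hs]
    field_simp
  have hInnE : ∀ s : ℝ, s ∈ Ioi (0:ℝ) → (∫ z : ℝ,
      Real.exp (-s) / Real.sqrt (4 * Real.pi * s) * Real.exp (-(x - z) ^ 2 / (4 * s))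
        * u (z + τ * c * s)) ≤ Real.exp (-μ * x) * Real.exp (-β * s) := by
    intro s hs
    rw [mem_Ioi] at hs
    set m := x - 2 * μ * s with hm
    have hg : Integrable (fun z : ℝ =>
        (Real.exp (-s) / Real.sqrt (4 * Real.pi * s)
          * Real.exp (μ ^ 2 * s - μ * x - τ * μ * c * s)) * Real.exp (-(z - m) ^ 2 / (4 * s))) :=
      (gauss_integrable s m hs).const_mul _
    have hle : ∀ z : ℝ,
        Real.exp (-s) / Real.sqrt (4 * Real.pi * s) * Real.exp (-(x - z) ^ 2 / (4 * s))
          * u (z + τ * c * s)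
        ≤ (Real.exp (-s) / Real.sqrt (4 * Real.pi * s)
          * Real.exp (μ ^ 2 * s - μ * x - τ * μ * c * s)) * Real.exp (-(z - m) ^ 2 / (4 * s)) := by
      intro z
      refine le_trans (mul_le_mul_of_nonneg_left (huE (z + τ * c * s)) (hK0 s z)) (le_of_eq ?_)
      have key : Real.exp (-(x - z) ^ 2 / (4 * s)) * Real.exp (-μ * (z + τ * c * s))
          = Real.exp (μ ^ 2 * s - μ * x - τ * μ * c * s) * Real.exp (-(z - m) ^ 2 / (4 * s)) := by
        rw [← Real.exp_add, ← Real.exp_add]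
        congr 1
        rw [hm]
        field_simp
        ring
      calc Real.exp (-s) / Real.sqrt (4 * Real.pi * s) * Real.exp (-(x - z) ^ 2 / (4 * s))
            * Real.exp (-μ * (z + τ * c * s))
          = Real.exp (-s) / Real.sqrt (4 * Real.pi * s)
            * (Real.exp (-(x - z) ^ 2 / (4 * s)) * Real.exp (-μ * (z + τ * c * s))) := by ring
        _ = Real.exp (-s) / Real.sqrt (4 * Real.pi * s)
            * (Real.exp (μ ^ 2 * s - μ * x - τ * μ * c * s)
              * Real.exp (-(z - m) ^ 2 / (4 * s))) := by rw [key]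
        _ = (Real.exp (-s) / Real.sqrt (4 * Real.pi * s)
            * Real.exp (μ ^ 2 * s - μ * x - τ * μ * c * s))
              * Real.exp (-(z - m) ^ 2 / (4 * s)) := by ring
    have h := integral_mono_of_nonneg
      (Eventually.of_forall fun z => mul_nonneg (hK0 s z) (hu0 _)) hg (Eventually.of_forall hle)
    refine h.trans_eq ?_
    rw [integral_const_mul, gauss_shift s m hs]
    have hne : Real.sqrt (4 * Real.pi * s) ≠ 0 := ne_of_gt (hsqrt s hs)
    field_simp
    rw [← Real.exp_add, ← Real.exp_add]
    congr 1
    rw [hβdef]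
    ring
  have hV0 : 0 ≤ Vfun τ c u x := by
    unfold Vfun
    exact setIntegral_nonneg measurableSet_Ioi fun s _ => hInn0 s
  have hVC : Vfun τ c u x ≤ C₀ := by
    have hg : IntegrableOn (fun s : ℝ => Real.exp (-s) * C₀) (Ioi (0:ℝ)) := by
      have := (exp_neg_integrableOn_Ioi (0:ℝ) one_pos).mul_const C₀
      simp [neg_one_mul] at this; exact this
    have h := integral_mono_of_nonneg (μ := volume.restrict (Ioi 0))
      (Eventually.of_forall fun s => hInn0 s) hg
      ((ae_restrict_iff' measurableSet_Ioi).mpr (Eventually.of_forall hInnC))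
    unfold Vfun
    refine h.trans_eq ?_
    rw [integral_mul_const, integral_exp_neg_Ioi_zero, one_mul]
  have hVE : Vfun τ c u x ≤ Real.exp (-μ * x) / β := by
    have hg : IntegrableOn (fun s : ℝ => Real.exp (-μ * x) * Real.exp (-β * s)) (Ioi (0:ℝ)) :=
      (exp_neg_integrableOn_Ioi (0:ℝ) hβ).const_mul _
    have h := integral_mono_of_nonneg (μ := volume.restrict (Ioi 0))
      (Eventually.of_forall fun s => hInn0 s) hg
      ((ae_restrict_iff' measurableSet_Ioi).mpr (Eventually.of_forall hInnE))
    unfold Vfun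
    refine h.trans_eq ?_
    rw [integral_const_mul, integral_exp_neg_mul_Ioi hβ, mul_one_div]
  exact ⟨hV0, le_min hVC hVE⟩
end
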